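/- arXiv:1310.1794 — 7 statements merged into one kernel-verified Lean document; each statement's English description precedes it below -/
import Mathlib

section
/- Let A, B be 3×3 real matrices with det A = det B = 1 and rank(A − B) = 1. Then for every λ ∈ [0,1], det(λA + (1−λ)B) = 1. -/
lemma rank_one_struct (C : Matrix (Fin 3) (Fin 3) ℝ) (h : C.rank = 1) :
    ∃ a b : Fin 3 → ℝ, ∀ i j, C i j = a i * b j := by
  have hle : Module.finrank ℝ (LinearMap.range C.mulVecLin) ≤ 1 := by
    rw [Matrix.rank] at h; omega
  rw [Submodule.finrank_le_one_iff_isPrincipal] at hle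
  obtain ⟨v, hv⟩ := hle
  refine ⟨v, fun j => Classical.choose (?_ : ∃ c : ℝ, c • v = C.mulVec (Pi.single j 1)), ?_⟩
  · have : C.mulVec (Pi.single j 1) ∈ LinearMap.range C.mulVecLin := ⟨Pi.single j 1, rfl⟩
    rw [hv, Submodule.mem_span_singleton] at this
    exact this
  · intro i j
    have h2 := Classical.choose_spec
      (show ∃ c : ℝ, c • v = C.mulVec (Pi.single j 1) by
        have : C.mulVec (Pi.single j 1) ∈ LinearMap.range C.mulVecLin := ⟨Pi.single j 1, rfl⟩
        rw [hv, Submodule.mem_span_singleton] at this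
        exact this)
    have h3 := congrFun h2 i
    simp [Matrix.mulVec_single] at h3
    rw [mul_comm]
    simpa using h3.symm

theorem det_convex_combination_of_rank_one
    (A B : Matrix (Fin 3) (Fin 3) ℝ)
    (hA : A.det = 1) (hB : B.det = 1)
    (hrank : (A - B).rank = 1) :
    ∀ l : ℝ, l ∈ Set.Icc (0 : ℝ) 1 → (l • A + (1 - l) • B).det = 1 := by
  obtain ⟨a, b, hab⟩ := rank_one_struct (A - B) hrank
  intro l _
  have hAeq : ∀ i j, A i j = B i j + a i * b j := by
    intro i j
    have := hab i j
    simp [Matrix.sub_apply] at this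
    linarith
  rw [Matrix.det_fin_three] at hA hB ⊢
  simp only [Matrix.add_apply, Matrix.smul_apply, smul_eq_mul, hAeq] at hA ⊢
  linear_combination l * hA + (1 - l) * hB
end

section
/- Let E be a trace-free symmetric 3×3 real matrix with ordered eigenvalues μ₁(E) ≤ μ₂(E) ≤ μ₃(E). Define V(E) = min over unit vectors n ∈ S² of |E − U_n|², where U_n = (1/2)(3 n⊗n − I) and |·| is the Frobenius norm. Then V(E) = (μ₁(E) + 1/2)² + (μ₂(E) + 1/2)² + (μ₃(E) − 1)², and the minimum is attained when n is a unit eigenvector of E corresponding to the eigenvalue μ₃(E). -/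
open Matrix

/-- `U_n = (1/2)(3 n⊗n − I)`. -/
noncomputable def Umat (n : Fin 3 → ℝ) : Matrix (Fin 3) (Fin 3) ℝ :=
  (1 / 2 : ℝ) • ((3 : ℝ) • Matrix.vecMulVec n n - 1)

/-- Squared Frobenius distance of `E` to `U_n`. -/
noncomputable def distSqU (E : Matrix (Fin 3) (Fin 3) ℝ) (n : Fin 3 → ℝ) : ℝ :=
  ∑ i, ∑ j, (E i j - Umat n i j) ^ 2

theorem min_dist_to_wells
    (E : Matrix (Fin 3) (Fin 3) ℝ) (hE : E.IsSymm) (htr : E.trace = 0)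
    (μ : Fin 3 → ℝ) (v : Fin 3 → (Fin 3 → ℝ))
    (hmono : Monotone μ)
    (hortho : ∀ i j, (∑ k, v i k * v j k) = if i = j then (1 : ℝ) else 0)
    (heig : ∀ i, E *ᵥ v i = μ i • v i) :
    IsLeast {x : ℝ | ∃ n : Fin 3 → ℝ, (∑ i, (n i) ^ 2) = 1 ∧ x = distSqU E n}
      ((μ 0 + 1 / 2) ^ 2 + (μ 1 + 1 / 2) ^ 2 + (μ 2 - 1) ^ 2) ∧
    distSqU E (v 2) = (μ 0 + 1 / 2) ^ 2 + (μ 1 + 1 / 2) ^ 2 + (μ 2 - 1) ^ 2 := by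
  -- eigenvector equation, entrywise
  have h1 : ∀ i k, (∑ l, E k l * v i l) = μ i * v i k := by
    intro i k
    have h := congrFun (heig i) k
    simpa [Matrix.mulVec, dotProduct] using h
  -- completeness of the orthonormal system
  have hVtV : (Matrix.of v)ᵀ * (Matrix.of v) = 1 := by
    rw [mul_eq_one_comm]
    ext i j
    simpa [Matrix.mul_apply, Matrix.one_apply] using hortho i j
  have hcomp : ∀ k l, (∑ i, v i k * v i l) = if k = l then (1:ℝ) else 0 := by
    intro k l
    have h := congrFun (congrFun hVtV k) l
    simpa [Matrix.mul_apply, Matrix.one_apply] using h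
  have hnorm : ∀ i, (∑ k, (v i k)^2) = 1 := by
    intro i
    have h := hortho i i
    simpa [pow_two] using h
  -- spectral decomposition, entrywise
  have hspec : ∀ k l, E k l = ∑ i, μ i * v i k * v i l := by
    intro k l
    calc E k l = ∑ l', E k l' * (if l' = l then 1 else 0) := by simp
      _ = ∑ l', E k l' * (∑ i, v i l' * v i l) := by
          refine Finset.sum_congr rfl fun l' _ => ?_
          rw [hcomp l' l]
      _ = ∑ i, ∑ l', E k l' * (v i l' * v i l) := by
          simp_rw [Finset.mul_sum]; rw [Finset.sum_comm]
      _ = ∑ i, (∑ l', E k l' * v i l') * v i l := by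
          refine Finset.sum_congr rfl fun i _ => ?_
          rw [Finset.sum_mul]
          exact Finset.sum_congr rfl fun l' _ => by ring
      _ = ∑ i, μ i * v i k * v i l := by
          refine Finset.sum_congr rfl fun i _ => ?_
          rw [h1 i k]
  -- trace
  have hsum0 : μ 0 + μ 1 + μ 2 = 0 := by
    have htrace : ∑ k, E k k = 0 := by simpa [Matrix.trace, Matrix.diag] using htr
    have hh : ∑ k, E k k = ∑ i, μ i := by
      calc ∑ k, E k k = ∑ k, ∑ i, μ i * v i k * v i k :=
            Finset.sum_congr rfl fun k _ => hspec k k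
        _ = ∑ i, ∑ k, μ i * v i k * v i k := Finset.sum_comm
        _ = ∑ i, μ i * ∑ k, (v i k)^2 := by
            refine Finset.sum_congr rfl fun i _ => ?_
            rw [Finset.mul_sum]
            exact Finset.sum_congr rfl fun k _ => by ring
        _ = ∑ i, μ i := by simp [hnorm]
    rw [hh] at htrace
    simpa [Fin.sum_univ_three] using htrace
  have htr' : E 0 0 + E 1 1 + E 2 2 = 0 := by
    simpa [Matrix.trace, Matrix.diag, Fin.sum_univ_three] using htr
  -- expansion of any vector in the eigenbasis
  have hexp : ∀ (n : Fin 3 → ℝ) (l), n l = ∑ i, (∑ m, n m * v i m) * v i l := by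
    intro n l
    calc n l = ∑ l', n l' * (if l' = l then 1 else 0) := by simp
      _ = ∑ l', n l' * (∑ i, v i l' * v i l) := by
          refine Finset.sum_congr rfl fun l' _ => ?_
          rw [hcomp l' l]
      _ = ∑ i, ∑ l', n l' * (v i l' * v i l) := by
          simp_rw [Finset.mul_sum]; rw [Finset.sum_comm]
      _ = ∑ i, (∑ m, n m * v i m) * v i l := by
          refine Finset.sum_congr rfl fun i _ => ?_
          rw [Finset.sum_mul]
          exact Finset.sum_congr rfl fun l' _ => by ring
  -- the coefficients have unit norm
  have hA : ∀ n : Fin 3 → ℝ, (∑ k, (n k)^2) = 1 → (∑ i, (∑ m, n m * v i m)^2) = 1 := by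
    intro n hn
    calc ∑ i, (∑ m, n m * v i m)^2
        = ∑ i, ∑ l, n l * ((∑ m, n m * v i m) * v i l) := by
          refine Finset.sum_congr rfl fun i _ => ?_
          rw [sq, Finset.mul_sum]
          exact Finset.sum_congr rfl fun l _ => by ring
      _ = ∑ l, ∑ i, n l * ((∑ m, n m * v i m) * v i l) := Finset.sum_comm
      _ = ∑ l, n l * ∑ i, (∑ m, n m * v i m) * v i l := by
          refine Finset.sum_congr rfl fun l _ => ?_
          rw [Finset.mul_sum]
      _ = ∑ l, n l * n l := by
          refine Finset.sum_congr rfl fun l _ => by rw [← hexp n l]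
      _ = 1 := by simpa [pow_two] using hn
  -- key closed formula
  have key : ∀ n : Fin 3 → ℝ, (∑ k, (n k)^2) = 1 →
      distSqU E n = (μ 0^2 + μ 1^2 + μ 2^2)
        - 3 * (μ 0 * (∑ k, n k * v 0 k)^2 + μ 1 * (∑ k, n k * v 1 k)^2
               + μ 2 * (∑ k, n k * v 2 k)^2) + 3/2 := by
    intro n hn
    have hn' : n 0 ^2 + n 1 ^2 + n 2 ^2 = 1 := by
      simpa [Fin.sum_univ_three] using hn
    have hEn : ∀ k, (∑ l, E k l * n l) = ∑ i, μ i * (∑ m, n m * v i m) * v i k := by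
      intro k
      calc ∑ l, E k l * n l = ∑ l, E k l * ∑ i, (∑ m, n m * v i m) * v i l :=
            Finset.sum_congr rfl fun l _ => by rw [← hexp n l]
        _ = ∑ i, ∑ l, E k l * ((∑ m, n m * v i m) * v i l) := by
            simp_rw [Finset.mul_sum]; rw [Finset.sum_comm]
        _ = ∑ i, (∑ m, n m * v i m) * ∑ l, E k l * v i l := by
            refine Finset.sum_congr rfl fun i _ => ?_
            rw [Finset.mul_sum]
            exact Finset.sum_congr rfl fun l _ => by ring
        _ = ∑ i, μ i * (∑ m, n m * v i m) * v i k := by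
            refine Finset.sum_congr rfl fun i _ => ?_
            rw [h1 i k]; ring
    have hB : ∑ k, ∑ l, E k l * n k * n l = ∑ i, μ i * (∑ m, n m * v i m)^2 := by
      calc ∑ k, ∑ l, E k l * n k * n l = ∑ k, n k * ∑ l, E k l * n l := by
            refine Finset.sum_congr rfl fun k _ => ?_
            rw [Finset.mul_sum]
            exact Finset.sum_congr rfl fun l _ => by ring
        _ = ∑ k, n k * ∑ i, μ i * (∑ m, n m * v i m) * v i k :=
            Finset.sum_congr rfl fun k _ => by rw [hEn k]
        _ = ∑ k, ∑ i, n k * (μ i * (∑ m, n m * v i m) * v i k) :=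
            Finset.sum_congr rfl fun k _ => by rw [Finset.mul_sum]
        _ = ∑ i, ∑ k, n k * (μ i * (∑ m, n m * v i m) * v i k) := Finset.sum_comm
        _ = ∑ i, μ i * (∑ m, n m * v i m)^2 := by
            refine Finset.sum_congr rfl fun i _ => ?_
            calc ∑ k, n k * (μ i * (∑ m, n m * v i m) * v i k)
                = ∑ k, (μ i * ∑ m, n m * v i m) * (n k * v i k) :=
                  Finset.sum_congr rfl fun k _ => by ring
              _ = (μ i * ∑ m, n m * v i m) * ∑ k, n k * v i k :=
                  (Finset.mul_sum Finset.univ (fun k => n k * v i k)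
                    (μ i * ∑ m, n m * v i m)).symm
              _ = μ i * (∑ m, n m * v i m)^2 := by ring
    have hC : ∑ k, ∑ l, (E k l)^2 = μ 0^2 + μ 1^2 + μ 2^2 := by
      have hrow : ∀ k, ∑ l, (E k l)^2 = ∑ i, (μ i)^2 * (v i k)^2 := by
        intro k
        calc ∑ l, (E k l)^2 = ∑ l, E k l * ∑ i, μ i * v i k * v i l := by
              refine Finset.sum_congr rfl fun l _ => ?_
              rw [← hspec k l]; ring
          _ = ∑ i, ∑ l, E k l * (μ i * v i k * v i l) := by
              simp_rw [Finset.mul_sum]; rw [Finset.sum_comm]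
          _ = ∑ i, (μ i * v i k) * ∑ l, E k l * v i l := by
              refine Finset.sum_congr rfl fun i _ => ?_
              rw [Finset.mul_sum]
              exact Finset.sum_congr rfl fun l _ => by ring
          _ = ∑ i, (μ i)^2 * (v i k)^2 := by
              refine Finset.sum_congr rfl fun i _ => ?_
              rw [h1 i k]; ring
      calc ∑ k, ∑ l, (E k l)^2 = ∑ k, ∑ i, (μ i)^2 * (v i k)^2 :=
            Finset.sum_congr rfl fun k _ => hrow k
        _ = ∑ i, ∑ k, (μ i)^2 * (v i k)^2 := Finset.sum_comm
        _ = ∑ i, (μ i)^2 * ∑ k, (v i k)^2 := by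
            refine Finset.sum_congr rfl fun i _ => ?_
            rw [Finset.mul_sum]
        _ = μ 0^2 + μ 1^2 + μ 2^2 := by simp [hnorm, Fin.sum_univ_three]
    have hD : distSqU E n
        = (∑ k, ∑ l, (E k l)^2) - 3 * (∑ k, ∑ l, E k l * n k * n l) + 3/2 := by
      simp [distSqU, Umat, Matrix.smul_apply, Matrix.sub_apply,
        Matrix.vecMulVec_apply, Matrix.one_apply, smul_eq_mul, Fin.sum_univ_three]
      linear_combination htr' + ((9/4) * (n 0^2 + n 1^2 + n 2^2 + 1) - 3/2) * hn'
    rw [hD, hC, hB]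
    simp only [Fin.sum_univ_three]
  -- value at v 2
  have hu : (∑ k, (v 2 k)^2) = 1 := hnorm 2
  have hv2 : distSqU E (v 2)
      = (μ 0 + 1 / 2) ^ 2 + (μ 1 + 1 / 2) ^ 2 + (μ 2 - 1) ^ 2 := by
    rw [key (v 2) hu, hortho 2 0, hortho 2 1, hortho 2 2,
      if_neg (by decide : ¬ (2:Fin 3) = 0), if_neg (by decide : ¬ (2:Fin 3) = 1),
      if_pos rfl]
    linear_combination -hsum0
  refine ⟨⟨⟨v 2, hu, hv2.symm⟩, ?_⟩, hv2⟩
  rintro x ⟨n, hn, rfl⟩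
  rw [key n hn]
  have hA' := hA n hn
  rw [Fin.sum_univ_three] at hA'
  have h02 : μ 0 ≤ μ 2 := hmono (by decide)
  have h12 : μ 1 ≤ μ 2 := hmono (by decide)
  have e1 : 0 ≤ (μ 2 - μ 0) * (∑ k, n k * v 0 k)^2 :=
    mul_nonneg (by linarith) (sq_nonneg _)
  have e2 : 0 ≤ (μ 2 - μ 1) * (∑ k, n k * v 1 k)^2 :=
    mul_nonneg (by linarith) (sq_nonneg _)
  have h3 : μ 2 * ((∑ k, n k * v 0 k)^2 + (∑ k, n k * v 1 k)^2 + (∑ k, n k * v 2 k)^2)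
      = μ 2 := by rw [hA']; ring
  nlinarith [e1, e2, h3, hsum0]
end

section
/- Let E be a trace-free symmetric 3×3 real matrix and V(E) = min_{n ∈ S²} |E − (1/2)(3 n⊗n − I)|². Then V(E) = 0 if and only if the ordered eigenvalues of E are μ₁(E) = μ₂(E) = −1/2 and μ₃(E) = 1. -/
open Matrix

lemma traceSq (C : Matrix (Fin 3) (Fin 3) ℝ) :
    (Cᵀ * C).trace = ∑ i, ∑ j, (C i j) ^ 2 := by
  simp [Matrix.trace, Matrix.mul_apply, Matrix.diag, sq]
  rw [Finset.sum_comm]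

theorem V_eq_zero_iff_eigenvalues
    (E : Matrix (Fin 3) (Fin 3) ℝ) (hE : E.IsSymm) (htr : E.trace = 0)
    (μ : Fin 3 → ℝ) (v : Fin 3 → (Fin 3 → ℝ))
    (hmono : Monotone μ)
    (hortho : ∀ i j, (∑ k, v i k * v j k) = if i = j then (1 : ℝ) else 0)
    (heig : ∀ i, E *ᵥ v i = μ i • v i) :
    sInf {x : ℝ | ∃ n : Fin 3 → ℝ, (∑ i, (n i) ^ 2) = 1 ∧ x = distSqU E n} = 0 ↔
      (μ 0 = -(1 / 2) ∧ μ 1 = -(1 / 2) ∧ μ 2 = 1) := by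
  set M : Matrix (Fin 3) (Fin 3) ℝ := Matrix.of v with hM
  set D : Matrix (Fin 3) (Fin 3) ℝ := Matrix.diagonal μ with hD
  have hMMt : M * Mᵀ = 1 := by
    ext i j
    simpa [Matrix.mul_apply, Matrix.one_apply, hM] using hortho i j
  have hMtM : Mᵀ * M = 1 := mul_eq_one_comm.mp hMMt
  have hED : E * Mᵀ = Mᵀ * D := by
    ext j i
    have h := congrFun (heig i) j
    simp [Matrix.mulVec, dotProduct, hM] at h
    simp [Matrix.mul_apply, hM, hD, Matrix.diagonal_apply, mul_ite, h, mul_comm]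
  have hEMDM : E = Mᵀ * D * M := by
    calc E = E * (Mᵀ * M) := by rw [hMtM, Matrix.mul_one]
    _ = (E * Mᵀ) * M := by rw [Matrix.mul_assoc]
    _ = Mᵀ * D * M := by rw [hED]
  have hμsum : μ 0 + μ 1 + μ 2 = 0 := by
    have h := htr
    rw [hEMDM, Matrix.trace_mul_comm, ← Matrix.mul_assoc, hMMt, Matrix.one_mul,
      Matrix.trace_diagonal] at h
    simpa [Fin.sum_univ_three] using h
  have key : ∀ n : Fin 3 → ℝ, (∑ i, n i ^ 2) = 1 →
      ((M *ᵥ n) 0 ^ 2 + (M *ᵥ n) 1 ^ 2 + (M *ᵥ n) 2 ^ 2 = 1) ∧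
      distSqU E n = (μ 0 ^ 2 + μ 1 ^ 2 + μ 2 ^ 2)
        - 3 * (μ 0 * (M *ᵥ n) 0 ^ 2 + μ 1 * (M *ᵥ n) 1 ^ 2 + μ 2 * (M *ᵥ n) 2 ^ 2) + 3 / 2 := by
    intro n hn
    set c := M *ᵥ n with hc
    have hcn : Mᵀ *ᵥ c = n := by rw [hc, Matrix.mulVec_mulVec, hMtM, Matrix.one_mulVec]
    have hcsum : c 0 ^ 2 + c 1 ^ 2 + c 2 ^ 2 = 1 := by
      have h1 : c ⬝ᵥ c = n ⬝ᵥ n := by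
        calc c ⬝ᵥ c = c ⬝ᵥ (M *ᵥ n) := by rw [← hc]
        _ = (c ᵥ* M) ⬝ᵥ n := Matrix.dotProduct_mulVec _ _ _
        _ = (Mᵀ *ᵥ c) ⬝ᵥ n := by rw [Matrix.mulVec_transpose]
        _ = n ⬝ᵥ n := by rw [hcn]
      rw [Fin.sum_univ_three] at hn
      simp [dotProduct, Fin.sum_univ_three] at h1
      nlinarith [h1, hn]
    have hUc : Umat n = Mᵀ * Umat c * M := by
      have h1 : Mᵀ * Matrix.vecMulVec c c * M = Matrix.vecMulVec n n := by
        rw [show Matrix.vecMulVec n n = Matrix.vecMulVec (Mᵀ *ᵥ c) (Mᵀ *ᵥ c) by rw [hcn]]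
        ext j k
        simp [Matrix.mul_apply, Matrix.vecMulVec_apply, Matrix.mulVec, dotProduct,
          Fin.sum_univ_three]
        ring
      have h2 : Mᵀ * Umat c * M
          = (1/2 : ℝ) • ((3:ℝ) • (Mᵀ * Matrix.vecMulVec c c * M) - Mᵀ * M) := by
        simp [Umat, Matrix.mul_smul, Matrix.smul_mul, Matrix.mul_sub, Matrix.sub_mul,
          Matrix.mul_one]
      rw [h2, h1, hMtM, Umat]
    have hsub : E - Umat n = Mᵀ * (D - Umat c) * M := by
      rw [hEMDM, hUc, Matrix.mul_sub, Matrix.sub_mul]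
    have htrace : distSqU E n = ∑ i, ∑ j, ((D - Umat c) i j)^2 := by
      have e1 : distSqU E n = ((E - Umat n)ᵀ * (E - Umat n)).trace := by
        rw [traceSq]; simp [distSqU, Matrix.sub_apply]
      have e2 : (Mᵀ * (D - Umat c) * M)ᵀ * (Mᵀ * (D - Umat c) * M)
          = Mᵀ * ((D - Umat c)ᵀ * (D - Umat c)) * M := by
        rw [Matrix.transpose_mul, Matrix.transpose_mul, Matrix.transpose_transpose]
        simp only [Matrix.mul_assoc]
        rw [← Matrix.mul_assoc M Mᵀ, hMMt, Matrix.one_mul]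
      rw [e1, hsub, e2, Matrix.trace_mul_comm, ← Matrix.mul_assoc, hMMt, Matrix.one_mul,
        traceSq]
    refine ⟨hcsum, ?_⟩
    rw [htrace]
    simp [Matrix.sub_apply, Umat, hD, Matrix.smul_apply, Matrix.vecMulVec_apply,
      Matrix.one_apply, Matrix.diagonal_apply, Fin.sum_univ_three, smul_eq_mul]
    linear_combination ((9/4 : ℝ) * ((c 0 ^ 2 + c 1 ^ 2 + c 2 ^ 2) + 1) - 3/2) * hcsum + hμsum
  set S : Set ℝ := {x : ℝ | ∃ n : Fin 3 → ℝ, (∑ i, (n i) ^ 2) = 1 ∧ x = distSqU E n} with hS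
  have hSne : S.Nonempty := ⟨distSqU E ![1,0,0], ![1,0,0], by norm_num [Fin.sum_univ_three]; rfl, rfl⟩
  have hS0 : ∀ x ∈ S, (0:ℝ) ≤ x := by
    rintro x ⟨n, hn, rfl⟩
    exact Finset.sum_nonneg fun i _ => Finset.sum_nonneg fun j _ => sq_nonneg _
  have hBdd : BddBelow S := ⟨0, fun x hx => hS0 x hx⟩
  constructor
  · intro h
    have h02 : μ 0 ≤ μ 2 := hmono (by decide : (0:Fin 3) ≤ 2)
    have h12 : μ 1 ≤ μ 2 := hmono (by decide : (1:Fin 3) ≤ 2)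
    have h01 : μ 0 ≤ μ 1 := hmono (by decide : (0:Fin 3) ≤ 1)
    have hg : (μ 0 ^ 2 + μ 1 ^ 2 + μ 2 ^ 2) - 3 * μ 2 + 3/2 ≤ 0 := by
      rw [← h]
      apply le_csInf hSne
      rintro x ⟨n, hn, rfl⟩
      obtain ⟨hcs, hval⟩ := key n hn
      nlinarith [mul_nonneg (sub_nonneg.2 h02) (sq_nonneg ((M *ᵥ n) 0)),
        mul_nonneg (sub_nonneg.2 h12) (sq_nonneg ((M *ᵥ n) 1))]
    have e1 : (μ 0 - μ 1) ^ 2 = 0 :=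
      le_antisymm (by nlinarith [sq_nonneg (μ 2 - 1)]) (sq_nonneg _)
    have e2 : (μ 2 - 1) ^ 2 = 0 :=
      le_antisymm (by nlinarith [sq_nonneg (μ 0 - μ 1)]) (sq_nonneg _)
    have e1' : μ 0 = μ 1 := by have := sq_eq_zero_iff.mp e1; linarith
    have e2' : μ 2 = 1 := by have := sq_eq_zero_iff.mp e2; linarith
    exact ⟨by linarith, by linarith, e2'⟩
  · rintro ⟨h0, h1, h2⟩
    have hn2 : (∑ i, (v 2 i) ^ 2) = 1 := by
      have := hortho 2 2
      simpa [sq] using this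
    have hci : ∀ i, (M *ᵥ v 2) i = if i = 2 then 1 else 0 := by
      intro i
      simpa [Matrix.mulVec, dotProduct, hM] using hortho i 2
    obtain ⟨hcs, hval⟩ := key (v 2) hn2
    have hzero : distSqU E (v 2) = 0 := by
      rw [hval, hci 0, hci 1, hci 2, if_neg (by decide : ¬(0:Fin 3) = 2),
        if_neg (by decide : ¬(1:Fin 3) = 2), if_pos rfl]
      norm_num [h0, h1, h2]
    have hmem : (0:ℝ) ∈ S := ⟨v 2, hn2, hzero.symm⟩
    exact le_antisymm (csInf_le hBdd hmem) (le_csInf hSne hS0)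
end

section
/- For r > 0, define on B(0,r) \ {0} ⊂ ℝ² the map ũ(x₁,x₂) = (3/4)·log((x₁² + x₂²)/r²)·(−x₂, x₁). Then at every point of B(0,r)\{0}, (∂_{x₁}ũ₁)² + ((∂_{x₁}ũ₂ + ∂_{x₂}ũ₁)/2)² = 9/16. -/
set_option maxHeartbeats 1000000


/-- The symmetric gradient of the explicit map `ũ(x) = (3/4) log((x₁²+x₂²)/r²) (−x₂, x₁)`
lies pointwise on the zero-energy set: `(∂₁ũ₁)² + ((∂₁ũ₂ + ∂₂ũ₁)/2)² = 9/16`. -/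
theorem explicit_map_strain_on_wells (r : ℝ) (hr : 0 < r) :
    ∀ p : ℝ × ℝ, p ≠ 0 → Real.sqrt (p.1 ^ 2 + p.2 ^ 2) < r →
      (fderiv ℝ (fun q : ℝ × ℝ =>
          (3 / 4 : ℝ) * Real.log ((q.1 ^ 2 + q.2 ^ 2) / r ^ 2) * (-q.2)) p (1, 0)) ^ 2
      + ((fderiv ℝ (fun q : ℝ × ℝ =>
            (3 / 4 : ℝ) * Real.log ((q.1 ^ 2 + q.2 ^ 2) / r ^ 2) * q.1) p (1, 0)
          + fderiv ℝ (fun q : ℝ × ℝ =>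
            (3 / 4 : ℝ) * Real.log ((q.1 ^ 2 + q.2 ^ 2) / r ^ 2) * (-q.2)) p (0, 1)) / 2) ^ 2
      = 9 / 16 := by
  intro p hp _
  obtain ⟨x, y⟩ := p
  have hxy : x ≠ 0 ∨ y ≠ 0 := by
    by_contra hc
    push_neg at hc
    exact hp (by simp [hc.1, hc.2, Prod.ext_iff])
  have hs : (0:ℝ) < x ^ 2 + y ^ 2 := by
    rcases hxy with h | h
    · positivity
    · positivity
  have hr2 : (r:ℝ) ^ 2 ≠ 0 := by positivity
  set s : ℝ := x ^ 2 + y ^ 2 with hs_def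
  -- derivative of g q = (q.1^2 + q.2^2)/r^2
  have hg : HasFDerivAt (fun q : ℝ × ℝ => (q.1 ^ 2 + q.2 ^ 2) / r ^ 2)
      (((r ^ 2)⁻¹ : ℝ) • (((2 * x) • ContinuousLinearMap.fst ℝ ℝ ℝ)
        + ((2 * y) • ContinuousLinearMap.snd ℝ ℝ ℝ))) (x, y) := by
    have h1 : HasFDerivAt (fun q : ℝ × ℝ => q.1 ^ 2 + q.2 ^ 2)
        (((2 * x) • ContinuousLinearMap.fst ℝ ℝ ℝ)
          + ((2 * y) • ContinuousLinearMap.snd ℝ ℝ ℝ)) (x, y) := by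
      have hfst : HasFDerivAt (fun q : ℝ × ℝ => q.1 ^ 2)
          ((2 * x) • ContinuousLinearMap.fst ℝ ℝ ℝ) (x, y) := by
        have h := (hasFDerivAt_fst (𝕜 := ℝ) (p := ((x, y) : ℝ × ℝ))).mul
          (hasFDerivAt_fst (𝕜 := ℝ) (p := ((x, y) : ℝ × ℝ)))
        have : ((x:ℝ) • ContinuousLinearMap.fst ℝ ℝ ℝ + x • ContinuousLinearMap.fst ℝ ℝ ℝ)
            = (2 * x) • ContinuousLinearMap.fst ℝ ℝ ℝ := by
          ext <;> simp [two_mul]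
        simpa [sq, this, Pi.mul_def] using h
      have hsnd : HasFDerivAt (fun q : ℝ × ℝ => q.2 ^ 2)
          ((2 * y) • ContinuousLinearMap.snd ℝ ℝ ℝ) (x, y) := by
        have h := (hasFDerivAt_snd (𝕜 := ℝ) (p := ((x, y) : ℝ × ℝ))).mul
          (hasFDerivAt_snd (𝕜 := ℝ) (p := ((x, y) : ℝ × ℝ)))
        have : ((y:ℝ) • ContinuousLinearMap.snd ℝ ℝ ℝ + y • ContinuousLinearMap.snd ℝ ℝ ℝ)
            = (2 * y) • ContinuousLinearMap.snd ℝ ℝ ℝ := by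
          ext <;> simp [two_mul]
        simpa [sq, this, Pi.mul_def] using h
      exact hfst.add hsnd
    simpa [div_eq_inv_mul, smul_smul] using h1.const_mul ((r ^ 2)⁻¹)
  have hgne : ((x:ℝ) ^ 2 + y ^ 2) / r ^ 2 ≠ 0 := by positivity
  have hlog := hg.log hgne
  -- f q = (3/4) * log (g q)
  have hf := hlog.const_mul (3 / 4 : ℝ)
  set F := ((3 / 4 : ℝ) • (((x ^ 2 + y ^ 2) / r ^ 2)⁻¹ •
      (((r ^ 2)⁻¹ : ℝ) • (((2 * x) • ContinuousLinearMap.fst ℝ ℝ ℝ)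
        + ((2 * y) • ContinuousLinearMap.snd ℝ ℝ ℝ))))) with hF
  have hf' : HasFDerivAt (fun q : ℝ × ℝ => (3 / 4 : ℝ) * Real.log ((q.1 ^ 2 + q.2 ^ 2) / r ^ 2))
      F (x, y) := hf
  -- evaluate F on basis vectors
  have hF10 : F (1, 0) = (3 / 2) * x / s := by
    simp [hF, ContinuousLinearMap.smul_apply, ContinuousLinearMap.add_apply, smul_eq_mul]
    have hs0 : x ^ 2 + y ^ 2 ≠ 0 := hs.ne'
    have hs0' : y ^ 2 + x ^ 2 ≠ 0 := by rw [add_comm]; exact hs.ne'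
    rw [hs_def]
    field_simp
    ring
  have hF01 : F (0, 1) = (3 / 2) * y / s := by
    simp [hF, ContinuousLinearMap.smul_apply, ContinuousLinearMap.add_apply, smul_eq_mul]
    have hs0 : x ^ 2 + y ^ 2 ≠ 0 := hs.ne'
    have hs0' : y ^ 2 + x ^ 2 ≠ 0 := by rw [add_comm]; exact hs.ne'
    rw [hs_def]
    field_simp
    ring
  have hsnd' : HasFDerivAt (fun q : ℝ × ℝ => -q.2)
      (-(ContinuousLinearMap.snd ℝ ℝ ℝ)) (x, y) := (hasFDerivAt_snd).neg
  have hfst' : HasFDerivAt (fun q : ℝ × ℝ => q.1)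
      (ContinuousLinearMap.fst ℝ ℝ ℝ) (x, y) := hasFDerivAt_fst
  have hu1 : HasFDerivAt (fun q : ℝ × ℝ =>
    (3 / 4 : ℝ) * Real.log ((q.1 ^ 2 + q.2 ^ 2) / r ^ 2) * (-q.2)) _ (x, y) := hf'.mul hsnd'
  have hu2 : HasFDerivAt (fun q : ℝ × ℝ =>
    (3 / 4 : ℝ) * Real.log ((q.1 ^ 2 + q.2 ^ 2) / r ^ 2) * q.1) _ (x, y) := hf'.mul hfst'
  set L : ℝ := (3 / 4 : ℝ) * Real.log (((x:ℝ) ^ 2 + y ^ 2) / r ^ 2) with hL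
  rw [hu1.fderiv, hu2.fderiv]
  have e1 : ((L • -(ContinuousLinearMap.snd ℝ ℝ ℝ) + (-y) • F) (1, 0) : ℝ)
      = -y * ((3/2) * x / s) := by
    simp [ContinuousLinearMap.add_apply, ContinuousLinearMap.smul_apply, hF10, smul_eq_mul]
  have e2 : ((L • ContinuousLinearMap.fst ℝ ℝ ℝ + x • F) (1, 0) : ℝ)
      = L + x * ((3/2) * x / s) := by
    simp [ContinuousLinearMap.add_apply, ContinuousLinearMap.smul_apply, hF10, smul_eq_mul]
  have e3 : ((L • -(ContinuousLinearMap.snd ℝ ℝ ℝ) + (-y) • F) (0, 1) : ℝ)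
      = -L + -y * ((3/2) * y / s) := by
    simp [ContinuousLinearMap.add_apply, ContinuousLinearMap.smul_apply, hF01, smul_eq_mul]
  rw [e1, e2, e3]
  have hsne : s ≠ 0 := ne_of_gt hs
  field_simp
  ring_nf
  rw [hs_def]
  ring
end

section
/- Let φ : ℝ² \ {0} → ℝ be given by φ(x₁,x₂) = ψ(ρ²) with ρ² = x₁² + x₂² and ψ(t) = ±(3/8)(t log t − 1) + C₁ t + C₂. Then φ solves the fully nonlinear PDE (∂²_{x₁x₂}φ)² + ((∂²_{x₁²}φ − ∂²_{x₂²}φ)/2)² = 9/16 on ℝ² \ {0}. -/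
open ContinuousLinearMap

lemma hasFDerivAt_rho (q : ℝ × ℝ) : HasFDerivAt (fun z : ℝ × ℝ => z.1 ^ 2 + z.2 ^ 2)
    ((2 * q.1) • fst ℝ ℝ ℝ + (2 * q.2) • snd ℝ ℝ ℝ) q := by
  have h1 := (hasFDerivAt_fst (𝕜 := ℝ) (p := q) (E := ℝ) (F := ℝ)).fun_mul (hasFDerivAt_fst (𝕜 := ℝ) (p := q) (E := ℝ) (F := ℝ))
  have h2 := (hasFDerivAt_snd (𝕜 := ℝ) (p := q) (E := ℝ) (F := ℝ)).fun_mul (hasFDerivAt_snd (𝕜 := ℝ) (p := q) (E := ℝ) (F := ℝ))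
  have h := h1.fun_add h2
  refine (h.congr_of_eventuallyEq (Filter.Eventually.of_forall fun z => ?_)).congr_fderiv ?_
  · beta_reduce; ring
  · refine ContinuousLinearMap.ext fun v => ?_; simp; ring

lemma rho_ne (q : ℝ × ℝ) (hq : q ≠ 0) : q.1 ^ 2 + q.2 ^ 2 ≠ 0 := by
  have h : q.1 ≠ 0 ∨ q.2 ≠ 0 := by
    by_contra h; push_neg at h; exact hq (Prod.ext h.1 h.2)
  rcases h with h | h <;> positivity

lemma hasDerivAt_psi (s C₁ C₂ : ℝ) {t : ℝ} (ht : t ≠ 0) :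
    HasDerivAt (fun t : ℝ => s * (3 / 8 : ℝ) * (t * Real.log t - 1) + C₁ * t + C₂)
      (s * (3 / 8 : ℝ) * (Real.log t + 1) + C₁) t := by
  have h1 : HasDerivAt (fun t : ℝ => t * Real.log t) (Real.log t + 1) t := by
    have := (hasDerivAt_id t).fun_mul (Real.hasDerivAt_log ht)
    simpa [mul_inv_cancel₀ ht, add_comm] using this
  have h3 := (((h1.sub_const 1).const_mul (s * (3/8:ℝ))).add ((hasDerivAt_id t).const_mul C₁)).add_const C₂
  simpa using h3

lemma fderiv_phi_apply (s C₁ C₂ : ℝ) (q : ℝ × ℝ) (hq : q ≠ 0) (v : ℝ × ℝ) :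
    fderiv ℝ (fun z : ℝ × ℝ =>
        s * (3 / 8 : ℝ) * ((z.1 ^ 2 + z.2 ^ 2) * Real.log (z.1 ^ 2 + z.2 ^ 2) - 1)
          + C₁ * (z.1 ^ 2 + z.2 ^ 2) + C₂) q v
      = (s * (3 / 8 : ℝ) * (Real.log (q.1 ^ 2 + q.2 ^ 2) + 1) + C₁)
          * (2 * q.1 * v.1 + 2 * q.2 * v.2) := by
  have h0 : HasFDerivAt (fun z : ℝ × ℝ =>
        s * (3 / 8 : ℝ) * ((z.1 ^ 2 + z.2 ^ 2) * Real.log (z.1 ^ 2 + z.2 ^ 2) - 1)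
          + C₁ * (z.1 ^ 2 + z.2 ^ 2) + C₂)
      ((s * (3 / 8 : ℝ) * (Real.log (q.1 ^ 2 + q.2 ^ 2) + 1) + C₁) •
        ((2 * q.1) • fst ℝ ℝ ℝ + (2 * q.2) • snd ℝ ℝ ℝ)) q :=
    HasDerivAt.comp_hasFDerivAt (h₂ := fun t : ℝ => s * (3 / 8 : ℝ) * (t * Real.log t - 1) + C₁ * t + C₂) q
      (hasDerivAt_psi s C₁ C₂ (rho_ne q hq)) (hasFDerivAt_rho q)
  rw [h0.fderiv]; simp; ring

lemma second_deriv (s C₁ C₂ : ℝ) (p : ℝ × ℝ) (hp : p ≠ 0) (v w : ℝ × ℝ) :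
    fderiv ℝ (fun q : ℝ × ℝ =>
        fderiv ℝ (fun z : ℝ × ℝ =>
          s * (3 / 8 : ℝ) * ((z.1 ^ 2 + z.2 ^ 2) * Real.log (z.1 ^ 2 + z.2 ^ 2) - 1)
            + C₁ * (z.1 ^ 2 + z.2 ^ 2) + C₂) q v) p w
      = (s * (3 / 8 : ℝ) * (Real.log (p.1 ^ 2 + p.2 ^ 2) + 1) + C₁)
          * (2 * v.1 * w.1 + 2 * v.2 * w.2)
        + (2 * p.1 * v.1 + 2 * p.2 * v.2)
          * (s * (3 / 8 : ℝ) * (p.1 ^ 2 + p.2 ^ 2)⁻¹ * (2 * p.1 * w.1 + 2 * p.2 * w.2)) := by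
  have hev : (fun q : ℝ × ℝ =>
      fderiv ℝ (fun z : ℝ × ℝ =>
        s * (3 / 8 : ℝ) * ((z.1 ^ 2 + z.2 ^ 2) * Real.log (z.1 ^ 2 + z.2 ^ 2) - 1)
          + C₁ * (z.1 ^ 2 + z.2 ^ 2) + C₂) q v) =ᶠ[nhds p]
      (fun q : ℝ × ℝ => (s * (3 / 8 : ℝ) * (Real.log (q.1 ^ 2 + q.2 ^ 2) + 1) + C₁)
          * (2 * q.1 * v.1 + 2 * q.2 * v.2)) := by
    filter_upwards [isOpen_compl_singleton.mem_nhds hp] with q hq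
    exact fderiv_phi_apply s C₁ C₂ q hq v
  rw [hev.fderiv_eq]
  -- derivative of the product
  have hu : HasFDerivAt (fun q : ℝ × ℝ => s * (3 / 8 : ℝ) * (Real.log (q.1 ^ 2 + q.2 ^ 2) + 1) + C₁)
      ((s * (3 / 8 : ℝ) * (p.1 ^ 2 + p.2 ^ 2)⁻¹) • ((2 * p.1) • fst ℝ ℝ ℝ + (2 * p.2) • snd ℝ ℝ ℝ)) p := by
    have h1 : HasDerivAt (fun t : ℝ => s * (3 / 8 : ℝ) * (Real.log t + 1) + C₁)
        (s * (3 / 8 : ℝ) * (p.1 ^ 2 + p.2 ^ 2)⁻¹) (p.1 ^ 2 + p.2 ^ 2) := by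
      have := (((Real.hasDerivAt_log (rho_ne p hp)).add_const 1).const_mul (s * (3/8:ℝ))).add_const C₁
      simpa using this
    exact h1.comp_hasFDerivAt p (hasFDerivAt_rho p)
  have hw : HasFDerivAt (fun q : ℝ × ℝ => 2 * q.1 * v.1 + 2 * q.2 * v.2)
      ((2 * v.1) • fst ℝ ℝ ℝ + (2 * v.2) • snd ℝ ℝ ℝ) p := by
    have h1 := (hasFDerivAt_fst (𝕜 := ℝ) (p := p) (E := ℝ) (F := ℝ)).const_mul (2 * v.1)
    have h2 := (hasFDerivAt_snd (𝕜 := ℝ) (p := p) (E := ℝ) (F := ℝ)).const_mul (2 * v.2)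
    have h := h1.fun_add h2
    exact h.congr_of_eventuallyEq (Filter.Eventually.of_forall fun z => by beta_reduce; ring)
  have h := (hu.fun_mul hw).fderiv
  rw [h]; simp; ring



/-- `φ(x) = ±(3/8)(ρ² log ρ² − 1) + C₁ρ² + C₂`, with `ρ² = x₁² + x₂²`, solves
`(∂²₁₂φ)² + ((∂²₁₁φ − ∂²₂₂φ)/2)² = 9/16` away from the origin. -/
theorem radial_potential_solves_PDE (s C₁ C₂ : ℝ) (hs : s = 1 ∨ s = -1) :
    ∀ p : ℝ × ℝ, p ≠ 0 →
      (fderiv ℝ (fun q : ℝ × ℝ =>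
          fderiv ℝ (fun z : ℝ × ℝ =>
            s * (3 / 8 : ℝ) * ((z.1 ^ 2 + z.2 ^ 2) * Real.log (z.1 ^ 2 + z.2 ^ 2) - 1)
              + C₁ * (z.1 ^ 2 + z.2 ^ 2) + C₂) q (1, 0)) p (0, 1)) ^ 2
      + ((fderiv ℝ (fun q : ℝ × ℝ =>
            fderiv ℝ (fun z : ℝ × ℝ =>
              s * (3 / 8 : ℝ) * ((z.1 ^ 2 + z.2 ^ 2) * Real.log (z.1 ^ 2 + z.2 ^ 2) - 1)
                + C₁ * (z.1 ^ 2 + z.2 ^ 2) + C₂) q (1, 0)) p (1, 0)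
          - fderiv ℝ (fun q : ℝ × ℝ =>
            fderiv ℝ (fun z : ℝ × ℝ =>
              s * (3 / 8 : ℝ) * ((z.1 ^ 2 + z.2 ^ 2) * Real.log (z.1 ^ 2 + z.2 ^ 2) - 1)
                + C₁ * (z.1 ^ 2 + z.2 ^ 2) + C₂) q (0, 1)) p (0, 1)) / 2) ^ 2
      = 9 / 16 := by
  intro p hp
  rw [second_deriv s C₁ C₂ p hp (1, 0) (0, 1), second_deriv s C₁ C₂ p hp (1, 0) (1, 0),
    second_deriv s C₁ C₂ p hp (0, 1) (0, 1)]
  have ht := rho_ne p hp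
  rcases hs with rfl | rfl <;>
  · simp only
    field_simp
    ring
end

section
/- Let A be a 3×3 trace-free real matrix whose symmetric part, in a suitable orthonormal basis, is diag(μ₂, μ₁, μ₃) with μ₁ ≤ μ₂ ≤ μ₃, μ₁ + μ₂ + μ₃ = 0, and μ₁ > −α for some α > 0, μ₃ < 2α. Set δ = √((α + μ₁)(α + μ₃)) and define A^± = diag-part plus entry ±2δ in position (2,3): A^± = [[μ₂,0,0],[0,μ₁,±2δ],[0,0,μ₃]]. Then A = (1/2)(A⁺ + skw A) + (1/2)(A⁻ + skw A), rank(A⁺ − A⁻) = 1, and the symmetric part of A^± + skw A has ordered eigenvalues (−α, μ₂, α − μ₂). -/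
open Matrix Polynomial

lemma charpoly_model_aux (a b c d α : ℝ)
    (hd : d * d = (α + b) * (α + c)) (hs : b + a + c = 0) :
    (!![a, 0, 0; 0, b, d; 0, d, c] : Matrix (Fin 3) (Fin 3) ℝ).charpoly
      = (X + C α) * (X - C a) * (X - C (α - a)) := by
  rw [Matrix.charpoly, Matrix.det_fin_three]
  simp [charmatrix_apply_eq, charmatrix_apply_ne, Matrix.charmatrix]
  have hsC : (C b + C a + C c : ℝ[X]) = 0 := by
    rw [← C_add, ← C_add, hs, C_0]
  have hdC : (C d * C d : ℝ[X]) = (C α + C b) * (C α + C c) := by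
    rw [← C_mul, ← C_add, ← C_add, ← C_mul, hd]
  linear_combination (-(X + C α)) * (X - C a) * hsC + (-(X - C a)) * hdC

theorem first_splitting_step
    (A : Matrix (Fin 3) (Fin 3) ℝ) (μ₁ μ₂ μ₃ α δ : ℝ)
    (hsym : (1 / 2 : ℝ) • (A + Aᵀ) = Matrix.diagonal ![μ₂, μ₁, μ₃])
    (h12 : μ₁ ≤ μ₂) (h23 : μ₂ ≤ μ₃) (hsum : μ₁ + μ₂ + μ₃ = 0)
    (hα : 0 < α) (hμ1 : -α < μ₁) (hμ3 : μ₃ < 2 * α)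
    (hδ : δ = Real.sqrt ((α + μ₁) * (α + μ₃)))
    (Ap Am : Matrix (Fin 3) (Fin 3) ℝ)
    (hAp : Ap = !![μ₂, 0, 0; 0, μ₁, 2 * δ; 0, 0, μ₃])
    (hAm : Am = !![μ₂, 0, 0; 0, μ₁, -(2 * δ); 0, 0, μ₃]) :
    A = (1 / 2 : ℝ) • (Ap + (1 / 2 : ℝ) • (A - Aᵀ))
        + (1 / 2 : ℝ) • (Am + (1 / 2 : ℝ) • (A - Aᵀ)) ∧
    (Ap - Am).rank = 1 ∧
    ((1 / 2 : ℝ) • ((Ap + (1 / 2 : ℝ) • (A - Aᵀ)) + (Ap + (1 / 2 : ℝ) • (A - Aᵀ))ᵀ)).charpoly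
      = (X + C α) * (X - C μ₂) * (X - C (α - μ₂)) ∧
    ((1 / 2 : ℝ) • ((Am + (1 / 2 : ℝ) • (A - Aᵀ)) + (Am + (1 / 2 : ℝ) • (A - Aᵀ))ᵀ)).charpoly
      = (X + C α) * (X - C μ₂) * (X - C (α - μ₂)) := by
  have h1 : 0 < α + μ₁ := by linarith
  have h3 : 0 < α + μ₃ := by linarith
  have hd : δ * δ = (α + μ₁) * (α + μ₃) := by
    rw [hδ]; exact Real.mul_self_sqrt (by positivity)
  have hδpos : 0 < δ := by rw [hδ]; positivity
  have hA : ∀ i j, (1 / 2 : ℝ) * (A i j + A j i) = Matrix.diagonal ![μ₂, μ₁, μ₃] i j := by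
    intro i j
    have h := congrFun (congrFun hsym i) j
    have hji : Matrix.diagonal ![μ₂, μ₁, μ₃] i j = Matrix.diagonal ![μ₂, μ₁, μ₃] j i := by
      rcases eq_or_ne i j with h | h
      · rw [h]
      · rw [Matrix.diagonal_apply_ne _ h, Matrix.diagonal_apply_ne _ (Ne.symm h)]
    simp only [Matrix.smul_apply, Matrix.add_apply, Matrix.transpose_apply,
      smul_eq_mul] at h
    linarith
  have hsumPM : ∀ i j, Ap i j + Am i j = 2 * Matrix.diagonal ![μ₂, μ₁, μ₃] i j := by
    intro i j
    fin_cases i <;> fin_cases j <;>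
      simp [hAp, hAm, Matrix.diagonal, Matrix.vecHead, Matrix.vecTail] <;> ring
  refine ⟨?_, ?_, ?_, ?_⟩
  · ext i j
    have h1' := hA i j
    have h2' := hsumPM i j
    simp only [Matrix.add_apply, Matrix.smul_apply, Matrix.sub_apply,
      Matrix.transpose_apply, smul_eq_mul]
    linarith
  · have heq : Ap - Am =
        (Matrix.diagonal ![0, 4 * δ, 0]).submatrix (Equiv.refl (Fin 3)) (Equiv.swap 1 2) := by
      ext i j
      fin_cases i <;> fin_cases j <;>
        simp [hAp, hAm, Matrix.submatrix_apply, Equiv.swap_apply_def, Matrix.diagonal,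
          Matrix.vecHead, Matrix.vecTail]
      ring
    rw [heq, Matrix.rank_submatrix, Matrix.rank_diagonal]
    have he : ∀ i : Fin 3, (![0, 4 * δ, 0] i ≠ 0) ↔ i = 1 := by
      intro i; fin_cases i <;> simp [hδpos.ne']
    rw [Fintype.card_congr (Equiv.subtypeEquivRight he), Fintype.card_subtype_eq]
  · have key : (1 / 2 : ℝ) • ((Ap + (1 / 2 : ℝ) • (A - Aᵀ)) + (Ap + (1 / 2 : ℝ) • (A - Aᵀ))ᵀ)
        = !![μ₂, 0, 0; 0, μ₁, δ; 0, δ, μ₃] := by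
      ext i j
      simp only [Matrix.add_apply, Matrix.smul_apply, Matrix.sub_apply,
        Matrix.transpose_apply, smul_eq_mul]
      fin_cases i <;> fin_cases j <;>
        simp [hAp, Matrix.vecHead, Matrix.vecTail] <;> ring
    rw [key]
    exact charpoly_model_aux μ₂ μ₁ μ₃ δ α hd hsum
  · have key : (1 / 2 : ℝ) • ((Am + (1 / 2 : ℝ) • (A - Aᵀ)) + (Am + (1 / 2 : ℝ) • (A - Aᵀ))ᵀ)
        = !![μ₂, 0, 0; 0, μ₁, -δ; 0, -δ, μ₃] := by
      ext i j
      simp only [Matrix.add_apply, Matrix.smul_apply, Matrix.sub_apply,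
        Matrix.transpose_apply, smul_eq_mul]
      fin_cases i <;> fin_cases j <;>
        simp [hAm, Matrix.vecHead, Matrix.vecTail] <;> ring
    rw [key]
    exact charpoly_model_aux μ₂ μ₁ μ₃ (-δ) α (by nlinarith) hsum
end

section
/- Let B be a 3×3 trace-free symmetric real matrix with ordered eigenvalues μ₁ = −α, μ₂, μ₃ with μ₃ < 2α, for some α > 0, represented in an orthonormal eigenbasis as diag(−α, μ₂, μ₃). Set ε = √((2α − μ₂)(2α − μ₃)) and D^± = [[−α,0,0],[0,μ₂,±2ε],[0,0,μ₃]]. Then B = (1/2)(D⁺ + D⁻) with rank(D⁺ − D⁻) = 1, and the symmetric part of each D^± has eigenvalues −α, −α, 2α. -/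
open Matrix Polynomial

theorem charpoly_aux (μ₂ μ₃ α ε : ℝ) (h : ε^2 = (2*α-μ₂)*(2*α-μ₃)) (htr : μ₂ + μ₃ = α) :
    (!![-α, 0, 0; 0, μ₂, ε; 0, ε, μ₃] : Matrix (Fin 3) (Fin 3) ℝ).charpoly
      = (X + C α) ^ 2 * (X - C (2 * α)) := by
  have h' : (C ε : ℝ[X]) * C ε = (2 * C α - C μ₂) * (2 * C α - C μ₃) := by
    rw [← C_mul, show ε * ε = (2*α-μ₂)*(2*α-μ₃) by nlinarith]
    simp [C_sub, C_mul, map_ofNat]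
  have htr' : (C μ₂ : ℝ[X]) + C μ₃ = C α := by rw [← C_add, htr]
  have hc2 : (C (2*α) : ℝ[X]) = 2 * C α := by simp [C_mul, map_ofNat]
  rw [Matrix.charpoly, Matrix.det_fin_three, hc2]
  simp [charmatrix_apply]
  linear_combination (-(X + C α)) * h' + (-(X + C α) * (X - 2 * C α)) * htr'

theorem second_splitting_step
    (B : Matrix (Fin 3) (Fin 3) ℝ) (μ₂ μ₃ α ε : ℝ)
    (hB : B = Matrix.diagonal ![-α, μ₂, μ₃])
    (hα : 0 < α) (h12 : -α ≤ μ₂) (h23 : μ₂ ≤ μ₃) (hμ3 : μ₃ < 2 * α)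
    (htr : -α + μ₂ + μ₃ = 0)
    (hε : ε = Real.sqrt ((2 * α - μ₂) * (2 * α - μ₃)))
    (Dp Dm : Matrix (Fin 3) (Fin 3) ℝ)
    (hDp : Dp = !![-α, 0, 0; 0, μ₂, 2 * ε; 0, 0, μ₃])
    (hDm : Dm = !![-α, 0, 0; 0, μ₂, -(2 * ε); 0, 0, μ₃]) :
    B = (1 / 2 : ℝ) • (Dp + Dm) ∧
    (Dp - Dm).rank = 1 ∧
    ((1 / 2 : ℝ) • (Dp + Dpᵀ)).charpoly = (X + C α) ^ 2 * (X - C (2 * α)) ∧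
    ((1 / 2 : ℝ) • (Dm + Dmᵀ)).charpoly = (X + C α) ^ 2 * (X - C (2 * α)) := by
  have h2a : 0 < 2 * α - μ₂ := by linarith
  have h3a : 0 < 2 * α - μ₃ := by linarith
  have hεpos : 0 < ε := by
    rw [hε]; exact Real.sqrt_pos.mpr (mul_pos h2a h3a)
  have hε2 : ε ^ 2 = (2 * α - μ₂) * (2 * α - μ₃) := by
    rw [hε]; exact Real.sq_sqrt (le_of_lt (mul_pos h2a h3a))
  have htr2 : μ₂ + μ₃ = α := by linarith
  refine ⟨?_, ?_, ?_, ?_⟩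
  · subst hB hDp hDm
    ext i j
    fin_cases i <;> fin_cases j <;>
      simp [Matrix.diagonal, Matrix.vecHead, Matrix.vecTail] <;> ring
  · have heq : Dp - Dm =
        (Matrix.diagonal ![(0:ℝ), 4 * ε, 0]).submatrix (Equiv.refl (Fin 3)) (Equiv.swap 1 2) := by
      subst hDp hDm
      ext i j
      fin_cases i <;> fin_cases j <;>
        simp [Matrix.diagonal, Equiv.swap_apply_def, Matrix.vecHead, Matrix.vecTail] <;> ring
    rw [heq, Matrix.rank_submatrix, Matrix.rank_diagonal]
    have hiff : ∀ i : Fin 3, ![(0:ℝ), 4 * ε, 0] i ≠ 0 ↔ i = 1 := by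
      intro i
      fin_cases i <;> simp [ne_of_gt hεpos, (by positivity : (0:ℝ) < 4 * ε).ne']
    rw [Fintype.card_congr (Equiv.subtypeEquivRight hiff), Fintype.card_subtype_eq]
  · have : (1 / 2 : ℝ) • (Dp + Dpᵀ) = !![-α, 0, 0; 0, μ₂, ε; 0, ε, μ₃] := by
      subst hDp
      ext i j
      fin_cases i <;> fin_cases j <;> simp [Matrix.transpose, Matrix.vecHead, Matrix.vecTail] <;> ring
    rw [this]
    exact charpoly_aux μ₂ μ₃ α ε hε2 htr2
  · have : (1 / 2 : ℝ) • (Dm + Dmᵀ) = !![-α, 0, 0; 0, μ₂, -ε; 0, -ε, μ₃] := by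
      subst hDm
      ext i j
      fin_cases i <;> fin_cases j <;> simp [Matrix.transpose, Matrix.vecHead, Matrix.vecTail] <;> ring
    rw [this]
    exact charpoly_aux μ₂ μ₃ α (-ε) (by rw [neg_pow]; simpa using hε2) htr2
end
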